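/- Let a_{12}, a_{23}, …, a_{n−1,n} be the superdiagonal weights of a line network, i.i.d. uniform on [0,1]. Then the minimal Frobenius norm δ(n) of a structured perturbation rendering the line network (observed from node 1) unobservable satisfies δ(n) = min{a_{12}, …, a_{n−1,n}} and 𝔼[δ(n)] = 1/n. -/

import Mathlib

open MeasureTheory ProbabilityTheory

/-- Frobenius norm of a real matrix. -/
noncomputable def frobNorm {n : ℕ} (M : Matrix (Fin n) (Fin n) ℝ) : ℝ :=
  Real.sqrt (∑ i, ∑ j, (M i j) ^ 2)

/-- Tridiagonal (line network) sparsity pattern. -/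
def triPattern {n : ℕ} (M : Matrix (Fin n) (Fin n) ℝ) : Prop :=
  ∀ i j : Fin n, ((i : ℕ) + 1 < j ∨ (j : ℕ) + 1 < i) → M i j = 0

lemma abs_entry_le_frobNorm {n : ℕ} (M : Matrix (Fin n) (Fin n) ℝ) (i j : Fin n) :
    |M i j| ≤ frobNorm M := by
  rw [frobNorm, ← Real.sqrt_sq_eq_abs]
  apply Real.sqrt_le_sqrt
  calc M i j ^ 2 ≤ ∑ j', M i j' ^ 2 :=
        Finset.single_le_sum (f := fun j' => M i j' ^ 2) (fun _ _ => sq_nonneg _) (Finset.mem_univ j)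
    _ ≤ ∑ i', ∑ j', M i' j' ^ 2 :=
        Finset.single_le_sum (f := fun i' => ∑ j', M i' j' ^ 2)
          (fun i' _ => Finset.sum_nonneg fun _ _ => sq_nonneg _) (Finset.mem_univ i)

lemma lower_bound_lemma {n : ℕ} (hn : 2 ≤ n) (b : Fin (n-1) → ℝ)
    (A Δ : Matrix (Fin n) (Fin n) ℝ) (hA : triPattern A) (hΔ : triPattern Δ)
    (hsup : ∀ i j : Fin n, (h : (j:ℕ) = (i:ℕ) + 1) → A i j = b ⟨(i:ℕ), by have := hn; omega⟩)
    (hfr : ∀ i, frobNorm Δ < b i)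
    (lam : ℂ) (x : Fin n → ℂ) (hx0 : x ⟨0, by have := hn; omega⟩ = 0)
    (heig : ((A + Δ).map (Complex.ofReal)).mulVec x = lam • x) :
    x = 0 := by
  have key : ∀ j : ℕ, ∀ h : j < n, x ⟨j, h⟩ = 0 := by
    intro j
    induction j using Nat.strong_induction_on with
    | _ j IH =>
      intro h
      match j, h with
      | 0, h => exact hx0
      | (i+1), h =>
        have hi : i < n := by omega
        have hrow := congrFun heig ⟨i, hi⟩
        have hin1 : (i : ℕ) < n - 1 := by omega
        have hAe : A ⟨i, hi⟩ ⟨i+1, h⟩ = b ⟨i, hin1⟩ := hsup ⟨i, hi⟩ ⟨i+1, h⟩ rfl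
        have habs : |Δ ⟨i, hi⟩ ⟨i+1, h⟩| ≤ frobNorm Δ := abs_entry_le_frobNorm _ _ _
        have hne : (A + Δ) ⟨i, hi⟩ ⟨i+1, h⟩ ≠ 0 := by
          have := hfr ⟨i, hin1⟩
          simp only [Matrix.add_apply, hAe]
          cases' abs_le.mp habs with h1 h2
          intro hcon; nlinarith
        have hsum : ∑ j', ((A + Δ).map (Complex.ofReal)) ⟨i, hi⟩ j' * x j'
            = ((A + Δ).map (Complex.ofReal)) ⟨i, hi⟩ ⟨i+1, h⟩ * x ⟨i+1, h⟩ := by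
          apply Finset.sum_eq_single
          · intro q _ hq
            rcases lt_or_ge (q : ℕ) (i+1) with hlt | hge
            · have hxq : x q = 0 := by
                have := IH q (by omega) (q.isLt)
                simpa using this
              simp [hxq]
            · have hgt : i + 1 < (q:ℕ) := by
                rcases eq_or_lt_of_le hge with he | hl
                · exact absurd (Fin.ext (show (q:ℕ) = i+1 by omega)) hq
                · exact hl
              have h1 : A ⟨i, hi⟩ q = 0 := hA _ _ (Or.inl hgt)
              have h2 : Δ ⟨i, hi⟩ q = 0 := hΔ _ _ (Or.inl hgt)
              simp [Matrix.map_apply, Matrix.add_apply, h1, h2]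
          · intro hmem; exact absurd (Finset.mem_univ _) hmem
        have hxi : x ⟨i, hi⟩ = 0 := IH i (by omega) hi
        rw [Matrix.mulVec, dotProduct] at hrow
        rw [hsum, Pi.smul_apply, hxi, smul_zero] at hrow
        rcases mul_eq_zero.mp hrow with hc | hc
        · exfalso
          rw [Matrix.map_apply] at hc
          exact hne (by exact_mod_cast hc)
        · exact hc
  funext j
  exact key j j.isLt

lemma mem_lemma {n : ℕ} (hn : 2 ≤ n) (b : Fin (n-1) → ℝ) (hb : ∀ i, 0 ≤ b i)
    (A : Matrix (Fin n) (Fin n) ℝ) (hA : triPattern A)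
    (hsup : ∀ i j : Fin n, (h : (j:ℕ) = (i:ℕ) + 1) → A i j = b ⟨(i:ℕ), by have := hn; omega⟩)
    (i₀ : Fin (n-1)) :
    ∃ Δ : Matrix (Fin n) (Fin n) ℝ, triPattern Δ ∧ b i₀ = frobNorm Δ ∧
      ∃ (lam : ℂ) (x : Fin n → ℂ), x ≠ 0 ∧ x ⟨0, by have := hn; omega⟩ = 0 ∧
        ((A + Δ).map (Complex.ofReal)).mulVec x = lam • x := by
  have hi₀n : (i₀ : ℕ) < n - 1 := i₀.isLt
  have hp : (i₀ : ℕ) < n := by omega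
  have hq : (i₀ : ℕ) + 1 < n := by omega
  obtain ⟨Δ, hΔpq, hΔz⟩ :
      ∃ Δ : Matrix (Fin n) (Fin n) ℝ, Δ ⟨i₀, hp⟩ ⟨(i₀:ℕ)+1, hq⟩ = -(b i₀) ∧
        ∀ r s : Fin n, ¬(r = ⟨i₀, hp⟩ ∧ s = ⟨(i₀:ℕ)+1, hq⟩) → Δ r s = 0 := by
    refine ⟨fun r s => if r = ⟨i₀, hp⟩ ∧ s = ⟨(i₀:ℕ)+1, hq⟩ then -(b i₀) else 0, by simp, ?_⟩
    intro r s hrs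
    exact if_neg hrs
  have htriΔ : triPattern Δ := by
    intro r s hrs
    apply hΔz
    rintro ⟨rfl, rfl⟩
    simp only [Fin.val_mk] at hrs
    omega
  have hfrob : b i₀ = frobNorm Δ := by
    have hsum : ∑ r, ∑ s, (Δ r s) ^ 2 = (b i₀)^2 := by
      rw [Finset.sum_eq_single (⟨i₀, hp⟩ : Fin n)]
      · rw [Finset.sum_eq_single (⟨(i₀:ℕ)+1, hq⟩ : Fin n)]
        · rw [hΔpq]; ring
        · intro s _ hs; rw [hΔz _ s (by tauto)]; ring
        · intro hmem; exact absurd (Finset.mem_univ _) hmem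
      · intro r _ hr
        apply Finset.sum_eq_zero
        intro s _; rw [hΔz r s (by tauto)]; ring
      · intro hmem; exact absurd (Finset.mem_univ _) hmem
    rw [frobNorm, hsum, Real.sqrt_sq (hb i₀)]
  refine ⟨Δ, htriΔ, hfrob, ?_⟩
  have hApΔ : (A + Δ) ⟨i₀, hp⟩ ⟨(i₀:ℕ)+1, hq⟩ = 0 := by
    rw [Matrix.add_apply, hΔpq, hsup ⟨i₀, hp⟩ ⟨(i₀:ℕ)+1, hq⟩ rfl]
    simp
  -- from now on only use: htriΔ (so A+Δ tridiagonal) and hApΔ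
  have htriM : ∀ r s : Fin n, ((r:ℕ)+1 < s ∨ (s:ℕ)+1 < r) → (A + Δ) r s = 0 := by
    intro r s hrs
    rw [Matrix.add_apply, hA r s hrs, htriΔ r s hrs, add_zero]
  clear hΔpq hΔz hfrob hsup hA
  generalize (A + Δ) = C at hApΔ htriM
  -- eigenvector of bottom-right block
  have hm1 : 1 ≤ n - 1 - (i₀:ℕ) := by omega
  obtain ⟨m, hmdef⟩ : ∃ m, m = n - 1 - (i₀:ℕ) := ⟨_, rfl⟩
  have hmn : (i₀:ℕ) + 1 + m = n := by omega
  haveI : NeZero m := ⟨by omega⟩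
  obtain ⟨B, hBdef⟩ :
      ∃ B : Matrix (Fin m) (Fin m) ℂ, ∀ k l : Fin m,
        B k l = (C.map (Complex.ofReal)) ⟨(i₀:ℕ)+1+(k:ℕ), by omega⟩ ⟨(i₀:ℕ)+1+(l:ℕ), by omega⟩ :=
    ⟨_, fun _ _ => rfl⟩
  obtain ⟨lam, hlam⟩ := Module.End.exists_eigenvalue (Matrix.mulVecLin B)
  obtain ⟨y, hy⟩ := hlam.exists_hasEigenvector
  have hyeq : B.mulVec y = lam • y := hy.apply_eq_smul
  have hy0 : y ≠ 0 := hy.right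
  obtain ⟨x, hxhigh, hxlow⟩ :
      ∃ x : Fin n → ℂ, (∀ (j : Fin n) (h : (i₀:ℕ)+1 ≤ (j:ℕ)),
          x j = y ⟨(j:ℕ) - ((i₀:ℕ)+1), by omega⟩) ∧
        (∀ j : Fin n, (j:ℕ) < (i₀:ℕ)+1 → x j = 0) := by
    refine ⟨fun j => if h : (i₀:ℕ)+1 ≤ (j:ℕ) then y ⟨(j:ℕ) - ((i₀:ℕ)+1), by omega⟩ else 0,
      fun j h => dif_pos h, fun j hj => dif_neg (by omega)⟩
  refine ⟨lam, x, ?_, ?_, ?_⟩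
  · obtain ⟨k, hk⟩ := Function.ne_iff.mp hy0
    intro hxz
    apply hk
    have h1 := congrFun hxz ⟨(i₀:ℕ)+1+(k:ℕ), by omega⟩
    rw [hxhigh _ (by simp)] at h1
    simpa using h1
  · exact hxlow _ (by simp)
  · funext i
    rcases lt_or_ge (i:ℕ) ((i₀:ℕ)+1) with hlow | hhigh
    · have hxi : x i = 0 := hxlow i hlow
      have hz : ((C.map (Complex.ofReal)).mulVec x) i = 0 := by
        rw [Matrix.mulVec, dotProduct]
        apply Finset.sum_eq_zero
        intro s _
        rcases lt_or_ge (s:ℕ) ((i₀:ℕ)+1) with hs | hs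
        · rw [hxlow s hs, mul_zero]
        · rcases Nat.lt_or_ge ((i:ℕ)+1) (s:ℕ) with hgt | hle
          · have h1 : C i s = 0 := htriM _ _ (Or.inl hgt)
            rw [Matrix.map_apply, h1]
            simp
          · have hs' : (s:ℕ) = (i₀:ℕ)+1 := by omega
            have hi' : (i:ℕ) = (i₀:ℕ) := by omega
            have hip : i = ⟨i₀, hp⟩ := Fin.ext hi'
            have hsq : s = ⟨(i₀:ℕ)+1, hq⟩ := Fin.ext hs'
            rw [Matrix.map_apply, hip, hsq, hApΔ]
            simp
      rw [hz, Pi.smul_apply, hxi, smul_zero]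
    · have hkm : (i:ℕ) - ((i₀:ℕ)+1) < m := by omega
      have hxi : x i = y ⟨(i:ℕ) - ((i₀:ℕ)+1), hkm⟩ := hxhigh i hhigh
      obtain ⟨emb, hembdef⟩ : ∃ emb : Fin m ↪ Fin n,
          ∀ l : Fin m, emb l = ⟨(i₀:ℕ)+1+(l:ℕ), by omega⟩ := by
        refine ⟨⟨fun l => ⟨(i₀:ℕ)+1+(l:ℕ), by omega⟩, ?_⟩, fun l => rfl⟩
        intro l1 l2 h12
        have := congrArg Fin.val h12
        simp only [Fin.val_mk] at this
        exact Fin.ext (by omega)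
      have hzero : ∀ j ∈ Finset.univ, j ∉ Finset.univ.map emb →
          (C.map (Complex.ofReal)) i j * x j = 0 := by
        intro j _ hj
        have hjlow : (j:ℕ) < (i₀:ℕ)+1 := by
          by_contra hcon
          push_neg at hcon
          apply hj
          rw [Finset.mem_map]
          refine ⟨⟨(j:ℕ) - ((i₀:ℕ)+1), by omega⟩, Finset.mem_univ _, ?_⟩
          rw [hembdef]
          exact Fin.ext (by simp; omega)
        rw [hxlow j hjlow, mul_zero]
      have hstep : ((C.map (Complex.ofReal)).mulVec x) i = (B.mulVec y) ⟨(i:ℕ) - ((i₀:ℕ)+1), hkm⟩ := by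
        rw [Matrix.mulVec, dotProduct, ← Finset.sum_subset (Finset.subset_univ _) hzero,
          Finset.sum_map]
        rw [Matrix.mulVec, dotProduct]
        apply Finset.sum_congr rfl
        intro l _
        have h1 : x (emb l) = y l := by
          rw [hembdef, hxhigh _ (by simp)]
          congr 1
          exact Fin.ext (by simp)
        have h2 : (C.map (Complex.ofReal)) i (emb l) = B ⟨(i:ℕ) - ((i₀:ℕ)+1), hkm⟩ l := by
          rw [hBdef, hembdef]
          congr 2
          exact Fin.ext (by simp; omega)
        rw [h1, h2]
      rw [hstep, hyeq, Pi.smul_apply, Pi.smul_apply, hxi]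

lemma exists_iInf_eq {k : ℕ} [NeZero k] (f : Fin k → ℝ) :
    ∃ i₀, (⨅ i, f i) = f i₀ ∧ ∀ i, f i₀ ≤ f i := by
  obtain ⟨i₀, -, h⟩ := Finset.exists_min_image Finset.univ f Finset.univ_nonempty
  have h' : ∀ i, f i₀ ≤ f i := fun i => h i (Finset.mem_univ i)
  exact ⟨i₀, le_antisymm (ciInf_le (Set.Finite.bddBelow (Set.finite_range f)) i₀)
    (le_ciInf h'), h'⟩


/-- For a line network with i.i.d. uniform `[0,1]` superdiagonal
weights `a₁,…,a_{n−1}`, the minimal Frobenius norm `δ(n)` of a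
tridiagonal-structured perturbation rendering the network unobservable from
node 1 equals `min{a₁,…,a_{n−1}}` (almost surely), and `𝔼[δ(n)] = 1/n`. -/
theorem line_network_radius_random {Ω : Type*} [MeasurableSpace Ω]
    (P : Measure Ω) [IsProbabilityMeasure P] (n : ℕ) (hn : 2 ≤ n)
    (a : Fin (n - 1) → Ω → ℝ) (hmeas : ∀ i, Measurable (a i))
    (hindep : iIndepFun a P)
    (hunif : ∀ i, Measure.map (a i) P = (volume : Measure ℝ).restrict (Set.Icc 0 1))
    (A : Ω → Matrix (Fin n) (Fin n) ℝ)
    (htri : ∀ ω, triPattern (A ω))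
    (hsupdiag : ∀ ω, ∀ i j : Fin n, (h : (j : ℕ) = (i : ℕ) + 1) →
      A ω i j = a ⟨(i : ℕ), by omega⟩ ω)
    (δ : Ω → ℝ) (hδ : ∀ ω, δ ω = ⨅ i, a i ω) :
    (∀ᵐ ω ∂P, IsLeast
      {c : ℝ | ∃ Δ : Matrix (Fin n) (Fin n) ℝ, triPattern Δ ∧ c = frobNorm Δ ∧
        ∃ (lam : ℂ) (x : Fin n → ℂ), x ≠ 0 ∧ x ⟨0, by omega⟩ = 0 ∧
          ((A ω + Δ).map (Complex.ofReal)).mulVec x = lam • x}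
      (δ ω)) ∧
    ∫ ω, δ ω ∂P = 1 / n := by
  haveI : NeZero (n-1) := ⟨by omega⟩
  -- a.s. in Icc
  have h1 : ∀ i, ∀ᵐ ω ∂P, a i ω ∈ Set.Icc (0:ℝ) 1 := by
    intro i
    apply ae_iff.mpr
    have : {ω | ¬ a i ω ∈ Set.Icc (0:ℝ) 1} = a i ⁻¹' (Set.Icc (0:ℝ) 1)ᶜ := rfl
    rw [this, ← Measure.map_apply (hmeas i) measurableSet_Icc.compl, hunif i,
      Measure.restrict_apply measurableSet_Icc.compl]
    simp
  have hae : ∀ᵐ ω ∂P, ∀ i, a i ω ∈ Set.Icc (0:ℝ) 1 := ae_all_iff.mpr h1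
  constructor
  · -- almost sure IsLeast
    filter_upwards [hae] with ω hω
    obtain ⟨i₀, hi₀, hi₀min⟩ := exists_iInf_eq (fun i => a i ω)
    have hδω : δ ω = a i₀ ω := by rw [hδ ω]; exact hi₀
    constructor
    · -- membership
      rw [Set.mem_setOf_eq]
      obtain ⟨Δ, htriΔ, hfrobΔ, rest⟩ := mem_lemma hn (fun i => a i ω)
        (fun i => (hω i).1) (A ω) (htri ω) (hsupdiag ω) i₀
      exact ⟨Δ, htriΔ, hδω.trans hfrobΔ, rest⟩
    · -- lower bound
      rintro c ⟨Δ, htriΔ, hceq, lam, x, hxne, hx0, heig⟩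
      by_contra hlt
      push_neg at hlt
      have hfr : ∀ i, frobNorm Δ < a i ω := by
        intro i
        calc frobNorm Δ = c := hceq.symm
          _ < δ ω := hlt
          _ ≤ a i ω := hδω ▸ hi₀min i
      exact hxne (lower_bound_lemma hn (fun i => a i ω) (A ω) Δ (htri ω) htriΔ
        (hsupdiag ω) hfr lam x hx0 heig)
  · -- expectation

    haveI : NeZero (n-1) := ⟨by omega⟩
    -- a.s. in Icc
    have h1 : ∀ i, ∀ᵐ ω ∂P, a i ω ∈ Set.Icc (0:ℝ) 1 := by
      intro i
      apply ae_iff.mpr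
      have : {ω | ¬ a i ω ∈ Set.Icc (0:ℝ) 1} = a i ⁻¹' (Set.Icc (0:ℝ) 1)ᶜ := rfl
      rw [this, ← Measure.map_apply (hmeas i) measurableSet_Icc.compl, hunif i,
        Measure.restrict_apply measurableSet_Icc.compl]
      simp
    have hae : ∀ᵐ ω ∂P, ∀ i, a i ω ∈ Set.Icc (0:ℝ) 1 := ae_all_iff.mpr h1
    -- measurability / integrability
    have hδm : Measurable δ := by
      have : δ = fun ω => ⨅ i, a i ω := funext hδ
      rw [this]; exact Measurable.iInf hmeas
    have hbdd : ∀ᵐ ω ∂P, 0 ≤ δ ω ∧ δ ω ≤ 1 := by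
      filter_upwards [hae] with ω hω
      obtain ⟨i₀, hi₀, -⟩ := exists_iInf_eq (fun i => a i ω)
      rw [hδ ω, hi₀]
      exact ⟨(hω i₀).1, (hω i₀).2⟩
    have hint : Integrable δ P := by
      apply Integrable.mono' (integrable_const (1:ℝ)) hδm.aestronglyMeasurable
      filter_upwards [hbdd] with ω hω
      rw [Real.norm_eq_abs, abs_le]
      exact ⟨by linarith [hω.1], hω.2⟩
    have hnn : 0 ≤ᵐ[P] δ := by filter_upwards [hbdd] with ω hω using hω.1
    -- tail probability
    have htail : ∀ t : ℝ, 0 ≤ t → P {ω | t < δ ω} = (ENNReal.ofReal (1 - t)) ^ (n-1) := by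
      intro t ht
      have hset : {ω | t < δ ω} = ⋂ i, a i ⁻¹' Set.Ioi t := by
        ext ω
        simp only [Set.mem_setOf_eq, Set.mem_iInter, Set.mem_preimage, Set.mem_Ioi, hδ ω]
        constructor
        · intro h i
          exact lt_of_lt_of_le h (ciInf_le (Set.Finite.bddBelow (Set.finite_range _)) i)
        · intro h
          obtain ⟨i₀, hi₀, -⟩ := exists_iInf_eq (fun i => a i ω)
          rw [hi₀]; exact h i₀
      have hprod := (iIndepFun_iff_measure_inter_preimage_eq_mul.mp hindep) Finset.univ
        (sets := fun _ => Set.Ioi t) (fun i _ => measurableSet_Ioi)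
      rw [show (⋂ i ∈ Finset.univ, a i ⁻¹' (fun _ => Set.Ioi t) i) = ⋂ i, a i ⁻¹' Set.Ioi t
        by simp] at hprod
      rw [hset, hprod]
      have hfac : ∀ i, P (a i ⁻¹' Set.Ioi t) = ENNReal.ofReal (1 - t) := by
        intro i
        rw [← Measure.map_apply (hmeas i) measurableSet_Ioi, hunif i,
          Measure.restrict_apply measurableSet_Ioi]
        have : Set.Ioi t ∩ Set.Icc (0:ℝ) 1 = Set.Ioc t 1 := by
          ext u
          simp only [Set.mem_inter_iff, Set.mem_Ioi, Set.mem_Icc, Set.mem_Ioc]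
          constructor
          · rintro ⟨h1, h2, h3⟩; exact ⟨h1, h3⟩
          · rintro ⟨h1, h2⟩; exact ⟨h1, le_trans ht (le_of_lt h1), h2⟩
        rw [this, Real.volume_Ioc]
      simp only [hfac]
      rw [Finset.prod_const, Finset.card_univ, Fintype.card_fin]
    rw [hint.integral_eq_integral_meas_lt hnn]
    have hcongr : ∫ t in Set.Ioi (0:ℝ), ENNReal.toReal (P {ω | t < δ ω})
        = ∫ t in Set.Ioi (0:ℝ), (max (1 - t) 0) ^ (n-1) := by
      apply setIntegral_congr_fun measurableSet_Ioi
      intro t ht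
      dsimp only
      rw [htail t (le_of_lt ht), ENNReal.toReal_pow, ENNReal.toReal_ofReal']
    simp only [measureReal_def]
    rw [hcongr]
    have hsplit : Set.Ioi (0:ℝ) = Set.Ioc (0:ℝ) 1 ∪ Set.Ioi 1 :=
      (Set.Ioc_union_Ioi_eq_Ioi zero_le_one).symm
    have hcont : Continuous (fun t : ℝ => (max (1 - t) 0) ^ (n-1)) :=
      ((continuous_const.sub continuous_id).max continuous_const).pow _
    have hi1 : IntegrableOn (fun t : ℝ => (max (1 - t) 0) ^ (n-1)) (Set.Ioc (0:ℝ) 1) volume :=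
      hcont.integrableOn_Ioc
    have hi2 : IntegrableOn (fun t : ℝ => (max (1 - t) 0) ^ (n-1)) (Set.Ioi (1:ℝ)) volume := by
      apply (integrableOn_congr_fun ?_ measurableSet_Ioi).mpr (integrableOn_zero)
      intro t ht
      have h0 : max (1 - t) 0 = 0 := max_eq_right (by simp at ht; linarith)
      dsimp only
      rw [h0, zero_pow (by omega)]
    rw [hsplit, setIntegral_union (Set.Ioc_disjoint_Ioi le_rfl) measurableSet_Ioi hi1 hi2]
    have hz : ∫ t in Set.Ioi (1:ℝ), (max (1 - t) 0) ^ (n-1) = 0 := by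
      rw [setIntegral_congr_fun measurableSet_Ioi (g := fun _ => (0:ℝ))]
      · exact integral_zero _ _
      · intro t ht
        have h0 : max (1 - t) 0 = 0 := max_eq_right (by simp at ht; linarith)
        dsimp only
        rw [h0, zero_pow (by omega)]
    rw [hz, add_zero]
    have hmain : ∫ t in Set.Ioc (0:ℝ) 1, (max (1 - t) 0) ^ (n-1)
        = ∫ t in Set.Ioc (0:ℝ) 1, (1 - t) ^ (n-1) := by
      apply setIntegral_congr_fun measurableSet_Ioc
      intro t ht
      dsimp only
      rw [max_eq_left (by simp at ht; linarith)]
    rw [hmain, ← intervalIntegral.integral_of_le zero_le_one,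
      intervalIntegral.integral_comp_sub_left (fun s => s ^ (n-1)) 1, sub_zero, sub_self,
      integral_pow]
    have hcast : ((n - 1 : ℕ) : ℝ) + 1 = (n : ℝ) := by
      rw [Nat.cast_sub (by omega)]; push_cast; ring
    rw [hcast]
    norm_num
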